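/- Let n ≥ 2 and w(x₁,…,xₙ) = 1/(1+|xₙ|)². For ℓ ∈ ℕ₊ set R_ℓ = [0,2^ℓ)ⁿ and E_ℓ = [0,2^ℓ)^{n−1} × [0,1). Then w(R_ℓ) = 2^{ℓn}/(1+2^ℓ), w(E_ℓ)/w(R_ℓ) = (1 + 2^{−ℓ})/2, and |E_ℓ|/|R_ℓ| = 2^{−ℓ}. Consequently, there exist no constants C, δ > 0 such that w(E_ℓ)/w(R_ℓ) ≤ C (|E_ℓ|/|R_ℓ|)^δ for all ℓ ∈ ℕ₊; in particular w ∉ A_{∞,𝓡}(ℝⁿ). -/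

import Mathlib

open MeasureTheory Set

noncomputable section

/-- An axis-parallel rectangle in `ℝⁿ`. -/
def IsRect {n : ℕ} (R : Set (Fin n → ℝ)) : Prop :=
  ∃ a b : Fin n → ℝ, (∀ i, a i < b i) ∧
    R = Set.univ.pi fun i => Set.Ico (a i) (b i)

/-- The strong Muckenhoupt `A_{∞,𝓡}` condition. -/
def AinftyRect {n : ℕ} (w : (Fin n → ℝ) → ℝ) : Prop :=
  ∃ C δ : ℝ, 0 < C ∧ 0 < δ ∧
    ∀ R E : Set (Fin n → ℝ), IsRect R → MeasurableSet E → E ⊆ R →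
      (∫ x in E, w x) / (∫ x in R, w x) ≤
        C * ((volume E).toReal / (volume R).toReal) ^ δ

lemma aux_prod {n : ℕ} (f : Fin n → ℝ → ℝ) (s : Fin n → Set ℝ)
    (hs : ∀ i, MeasurableSet (s i)) :
    ∫ x in Set.univ.pi s, ∏ i, f i (x i) = ∏ i, ∫ t in s i, f i t := by
  have h : ∀ x : Fin n → ℝ,
      (Set.univ.pi s).indicator (fun x => ∏ i, f i (x i)) x
        = ∏ i, (s i).indicator (f i) (x i) := by
    intro x
    by_cases hx : x ∈ Set.univ.pi s
    · rw [Set.indicator_of_mem hx]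
      exact Finset.prod_congr rfl fun i _ =>
        (Set.indicator_of_mem (hx i (Set.mem_univ i)) _).symm
    · rw [Set.indicator_of_notMem hx]
      simp only [Set.mem_pi, Set.mem_univ, true_implies, not_forall] at hx
      obtain ⟨i, hi⟩ := hx
      exact (Finset.prod_eq_zero (Finset.mem_univ i)
        (Set.indicator_of_notMem hi _)).symm
  rw [← integral_indicator (MeasurableSet.univ_pi hs)]
  simp only [h]
  rw [volume_pi, MeasureTheory.integral_fintype_prod_eq_prod
    (fun i => (s i).indicator (f i))]
  exact Finset.prod_congr rfl fun i _ => (integral_indicator (hs i))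

lemma aux_1d (b : ℝ) (hb : 0 ≤ b) :
    (∫ t in Set.Ico (0:ℝ) b, (1 + |t|) ^ (-2:ℤ)) = b / (1 + b) := by
  have h1 : (∫ t in Set.Ico (0:ℝ) b, (1 + |t|) ^ (-2:ℤ))
      = ∫ t in Set.Ico (0:ℝ) b, (1 + t) ^ (-2:ℤ) := by
    refine setIntegral_congr_fun measurableSet_Ico fun t ht => ?_
    rw [abs_of_nonneg ht.1]
  rw [h1, integral_Ico_eq_integral_Ioo, ← integral_Ioc_eq_integral_Ioo,
    ← intervalIntegral.integral_of_le hb]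
  have h2 : (∫ t in (0:ℝ)..b, (1 + t) ^ (-2:ℤ)) = ∫ u in (1:ℝ)..(1+b), u ^ (-2:ℤ) := by
    have := intervalIntegral.integral_comp_add_left (a := (0:ℝ)) (b := b)
      (fun u => u ^ (-2:ℤ)) 1
    simpa using this
  have hmem : (0:ℝ) ∉ Set.uIcc (1:ℝ) (1+b) := by
    rw [Set.uIcc_of_le (by linarith)]
    simp only [Set.mem_Icc, not_and]
    intro h; linarith
  rw [h2, integral_zpow (Or.inr ⟨by norm_num, hmem⟩)]
  have hb1 : (1:ℝ) + b ≠ 0 := by linarith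
  norm_num
  have hb2 : (-b + -1 : ℝ) ≠ 0 := by linarith
  field_simp
  ring

lemma aux_pi_int {n : ℕ} (i₀ : Fin n) (b c : ℝ) (hb : 0 ≤ b) (hc : 0 ≤ c) :
    (∫ x in Set.univ.pi (fun i => if i = i₀ then Set.Ico (0:ℝ) b else Set.Ico (0:ℝ) c),
      (1 + |x i₀|) ^ (-2:ℤ)) = (b / (1 + b)) * c ^ (n - 1) := by
  set s : Fin n → Set ℝ := fun i => if i = i₀ then Set.Ico (0:ℝ) b else Set.Ico (0:ℝ) c
    with hsdef
  set f : Fin n → ℝ → ℝ := fun i t => if i = i₀ then (1 + |t|) ^ (-2:ℤ) else 1 with hfdef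
  have hs : ∀ i, MeasurableSet (s i) := by
    intro i; simp only [hsdef]; split <;> exact measurableSet_Ico
  have h1 : (∫ x in Set.univ.pi s, (1 + |x i₀|) ^ (-2:ℤ))
      = ∫ x in Set.univ.pi s, ∏ i, f i (x i) := by
    simp [hfdef, Finset.prod_ite_eq']
  rw [h1, aux_prod f s hs]
  have h2 : ∀ i, (∫ t in s i, f i t) = if i = i₀ then b / (1 + b) else c := by
    intro i
    by_cases h : i = i₀
    · simp only [hsdef, hfdef, h, if_pos rfl]
      exact aux_1d b hb
    · simp only [hsdef, hfdef, if_neg h]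
      rw [setIntegral_const]
      simp [Real.volume_Ico, ENNReal.toReal_ofReal hc, hc]
  simp only [h2]
  rw [← Finset.mul_prod_erase Finset.univ _ (Finset.mem_univ i₀), if_pos rfl]
  congr 1
  rw [Finset.prod_congr rfl (fun i hi => if_neg (Finset.ne_of_mem_erase hi)),
    Finset.prod_const, Finset.card_erase_of_mem (Finset.mem_univ i₀),
    Finset.card_univ, Fintype.card_fin]

lemma aux_pi_vol {n : ℕ} (i₀ : Fin n) (b c : ℝ) (hb : 0 ≤ b) (hc : 0 ≤ c) :
    (volume (Set.univ.pi
      (fun i => if i = i₀ then Set.Ico (0:ℝ) b else Set.Ico (0:ℝ) c))).toReal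
      = b * c ^ (n - 1) := by
  rw [volume_pi_pi, ENNReal.toReal_prod]
  have h2 : ∀ i : Fin n,
      ((volume (if i = i₀ then Set.Ico (0:ℝ) b else Set.Ico (0:ℝ) c)).toReal)
        = if i = i₀ then b else c := by
    intro i
    by_cases h : i = i₀ <;>
      simp [h, Real.volume_Ico, ENNReal.toReal_ofReal, hb, hc]
  simp only [h2]
  rw [← Finset.mul_prod_erase Finset.univ _ (Finset.mem_univ i₀), if_pos rfl]
  congr 1
  rw [Finset.prod_congr rfl (fun i hi => if_neg (Finset.ne_of_mem_erase hi)),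
    Finset.prod_const, Finset.card_erase_of_mem (Finset.mem_univ i₀),
    Finset.card_univ, Fintype.card_fin]

theorem stmt7 (n : ℕ) (hn : 2 ≤ n)
    (w : (Fin n → ℝ) → ℝ)
    (hw : w = fun x => (1 + |x ⟨n - 1, by omega⟩|) ^ (-2 : ℤ))
    (R E : ℕ → Set (Fin n → ℝ))
    (hR : ∀ ℓ, R ℓ = Set.univ.pi fun _ => Set.Ico (0 : ℝ) (2 ^ ℓ))
    (hE : ∀ ℓ, E ℓ = Set.univ.pi fun i =>
      if i = ⟨n - 1, by omega⟩ then Set.Ico (0 : ℝ) 1 else Set.Ico (0 : ℝ) (2 ^ ℓ)) :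
    (∀ ℓ : ℕ, 1 ≤ ℓ → (∫ x in R ℓ, w x) = 2 ^ (ℓ * n) / (1 + 2 ^ ℓ)) ∧
    (∀ ℓ : ℕ, 1 ≤ ℓ → (∫ x in E ℓ, w x) / (∫ x in R ℓ, w x) = (1 + 2 ^ (-(ℓ : ℝ))) / 2) ∧
    (∀ ℓ : ℕ, 1 ≤ ℓ → (volume (E ℓ)).toReal / (volume (R ℓ)).toReal = 2 ^ (-(ℓ : ℝ))) ∧
    (¬ ∃ C δ : ℝ, 0 < C ∧ 0 < δ ∧ ∀ ℓ : ℕ, 1 ≤ ℓ →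
      (∫ x in E ℓ, w x) / (∫ x in R ℓ, w x) ≤
        C * ((volume (E ℓ)).toReal / (volume (R ℓ)).toReal) ^ δ) ∧
    ¬ AinftyRect w := by
  have hn1 : 1 ≤ n := by omega
  have i₀ : Fin n := ⟨n - 1, by omega⟩
  have hbpos : ∀ ℓ : ℕ, (0:ℝ) < 2 ^ ℓ := fun ℓ => by positivity
  have hRset : ∀ ℓ : ℕ, R ℓ = Set.univ.pi
      (fun i => if i = (⟨n - 1, by omega⟩ : Fin n) then Set.Ico (0:ℝ) (2^ℓ)
        else Set.Ico (0:ℝ) (2^ℓ)) := by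
    intro ℓ; rw [hR]; simp
  have hRval : ∀ ℓ : ℕ, (∫ x in R ℓ, w x) = (2^ℓ/(1+2^ℓ)) * ((2:ℝ)^ℓ)^(n-1) := by
    intro ℓ
    rw [hRset, hw]
    exact aux_pi_int _ (2^ℓ) (2^ℓ) (hbpos ℓ).le (hbpos ℓ).le
  have hEval : ∀ ℓ : ℕ, (∫ x in E ℓ, w x) = (1/2) * ((2:ℝ)^ℓ)^(n-1) := by
    intro ℓ
    rw [hE, hw]
    have := aux_pi_int (⟨n - 1, by omega⟩ : Fin n) 1 (2^ℓ) zero_le_one (hbpos ℓ).le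
    rw [this]
    norm_num
  have hvolR : ∀ ℓ : ℕ, (volume (R ℓ)).toReal = 2^ℓ * ((2:ℝ)^ℓ)^(n-1) := by
    intro ℓ
    rw [hRset]
    exact aux_pi_vol _ (2^ℓ) (2^ℓ) (hbpos ℓ).le (hbpos ℓ).le
  have hvolE : ∀ ℓ : ℕ, (volume (E ℓ)).toReal = 1 * ((2:ℝ)^ℓ)^(n-1) := by
    intro ℓ
    rw [hE]
    exact aux_pi_vol _ 1 (2^ℓ) zero_le_one (hbpos ℓ).le
  have hrpow : ∀ ℓ : ℕ, (2:ℝ) ^ (-(ℓ:ℝ)) = ((2:ℝ)^ℓ)⁻¹ := by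
    intro ℓ; rw [Real.rpow_neg (by norm_num), Real.rpow_natCast]
  have part1 : ∀ ℓ : ℕ, 1 ≤ ℓ → (∫ x in R ℓ, w x) = 2 ^ (ℓ * n) / (1 + 2 ^ ℓ) := by
    intro ℓ _
    rw [hRval, div_mul_eq_mul_div, ← pow_mul, ← pow_add]
    have hexp : ℓ + ℓ * (n - 1) = ℓ * n := by
      have h : n - 1 + 1 = n := by omega
      calc ℓ + ℓ * (n-1) = ℓ * ((n-1)+1) := by ring
        _ = ℓ * n := by rw [h]
    rw [hexp]
  have part2 : ∀ ℓ : ℕ, 1 ≤ ℓ →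
      (∫ x in E ℓ, w x) / (∫ x in R ℓ, w x) = (1 + 2 ^ (-(ℓ : ℝ))) / 2 := by
    intro ℓ _
    rw [hEval, hRval, hrpow]
    have h1 : ((2:ℝ)^ℓ)^(n-1) ≠ 0 := by positivity
    have h2 : (1:ℝ) + 2^ℓ ≠ 0 := by positivity
    have h3 : (2:ℝ)^ℓ ≠ 0 := (hbpos ℓ).ne'
    field_simp
    ring
  have part3 : ∀ ℓ : ℕ, 1 ≤ ℓ →
      (volume (E ℓ)).toReal / (volume (R ℓ)).toReal = 2 ^ (-(ℓ : ℝ)) := by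
    intro ℓ _
    rw [hvolE, hvolR, hrpow, one_mul]
    have h1 : ((2:ℝ)^ℓ)^(n-1) ≠ 0 := by positivity
    have h3 : (2:ℝ)^ℓ ≠ 0 := (hbpos ℓ).ne'
    field_simp
  have part4 : ¬ ∃ C δ : ℝ, 0 < C ∧ 0 < δ ∧ ∀ ℓ : ℕ, 1 ≤ ℓ →
      (∫ x in E ℓ, w x) / (∫ x in R ℓ, w x) ≤
        C * ((volume (E ℓ)).toReal / (volume (R ℓ)).toReal) ^ δ := by
    rintro ⟨C, δ, hC, hδ, h⟩
    set r : ℝ := (2:ℝ) ^ (-δ) with hr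
    have hr0 : 0 < r := Real.rpow_pos_of_pos (by norm_num) _
    have hr1 : r < 1 := Real.rpow_lt_one_of_one_lt_of_neg (by norm_num) (by linarith)
    obtain ⟨m, hm⟩ := exists_pow_lt_of_lt_one
      (show (0:ℝ) < 1/(2*C) by positivity) hr1
    set ℓ := m + 1 with hℓ
    have h1 := h ℓ (by omega)
    rw [part2 ℓ (by omega), part3 ℓ (by omega)] at h1
    have key : ((2:ℝ)^(-(ℓ:ℝ)))^δ = r ^ ℓ := by
      rw [← Real.rpow_natCast r ℓ, hr,
        ← Real.rpow_mul (by norm_num : (0:ℝ) ≤ 2),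
        ← Real.rpow_mul (by norm_num : (0:ℝ) ≤ 2)]
      congr 1
      ring
    rw [key] at h1
    have hpow : r ^ ℓ ≤ r ^ m := pow_le_pow_of_le_one hr0.le hr1.le (by omega)
    have hlt : C * r ^ ℓ < 1/2 := by
      calc C * r ^ ℓ ≤ C * r ^ m := by nlinarith
        _ < C * (1/(2*C)) := by exact mul_lt_mul_of_pos_left hm hC
        _ = 1/2 := by field_simp
    have hpos : (0:ℝ) < 2^(-(ℓ:ℝ)) := Real.rpow_pos_of_pos (by norm_num) _
    linarith
  refine ⟨part1, part2, part3, part4, ?_⟩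
  rintro ⟨C, δ, hC, hδ, h⟩
  apply part4
  refine ⟨C, δ, hC, hδ, fun ℓ hℓ => ?_⟩
  apply h (R ℓ) (E ℓ)
  · exact ⟨fun _ => 0, fun _ => 2^ℓ, fun i => by positivity, hR ℓ⟩
  · rw [hE]
    exact MeasurableSet.univ_pi fun i => by split <;> exact measurableSet_Ico
  · rw [hE, hR]
    refine Set.pi_mono fun i _ => ?_
    split
    · refine Set.Ico_subset_Ico le_rfl ?_
      exact one_le_pow₀ (by norm_num)
    · exact subset_rfl
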